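/- If L ∈ ℝ^{n×n} is (c_L,γ)-SED and M ∈ ℝ^{n×n} is (c_M,γ)-SED away from agent i, then for every integer k ≥ 0 the matrix (Lᵏ)ᵀMLᵏ is ((N·c_L)^{2k}·c_M, γ)-SED away from agent i. -/

import Mathlib

open Matrix

/-- Operator (induced l2) norm of a real matrix. -/
noncomputable def opNorm {α β : Type*} [Fintype α] [Fintype β] [DecidableEq β]
    (X : Matrix α β ℝ) : ℝ :=
  ‖LinearMap.toContinuousLinearMap (Matrix.toEuclideanLin X)‖

/-- Block `(l,j)` of a block-partitioned matrix. -/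
def blk {N : ℕ} {n m : Fin N → ℕ}
    (X : Matrix ((l : Fin N) × Fin (n l)) ((j : Fin N) × Fin (m j)) ℝ)
    (l j : Fin N) : Matrix (Fin (n l)) (Fin (m j)) ℝ :=
  fun a b => X ⟨l, a⟩ ⟨j, b⟩

/-- Block row of agent `i`. -/
def blkRow {N : ℕ} {n m : Fin N → ℕ}
    (K : Matrix ((l : Fin N) × Fin (m l)) ((j : Fin N) × Fin (n j)) ℝ)
    (i : Fin N) : Matrix (Fin (m i)) ((j : Fin N) × Fin (n j)) ℝ :=
  fun a b => K ⟨i, a⟩ b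

/-- Zero-padded version of a diagonal block. -/
def pad {N : ℕ} {n : Fin N → ℕ} (i : Fin N) (M : Matrix (Fin (n i)) (Fin (n i)) ℝ) :
    Matrix ((l : Fin N) × Fin (n l)) ((j : Fin N) × Fin (n j)) ℝ :=
  fun a b => if ha : a.1 = i then (if hb : b.1 = i then M (ha ▸ a.2) (hb ▸ b.2) else 0) else 0

/-- κ-truncation relative to agent `i`. -/
noncomputable def trunc {N : ℕ} {n m : Fin N → ℕ} (dist : Fin N → Fin N → ℝ) (i : Fin N) (κ : ℝ)
    (X : Matrix ((l : Fin N) × Fin (n l)) ((j : Fin N) × Fin (m j)) ℝ) :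
    Matrix ((l : Fin N) × Fin (n l)) ((j : Fin N) × Fin (m j)) ℝ :=
  fun a b => if max (dist i a.1) (dist i b.1) < κ then X a b else 0

/-- `X` is `(c,γ)`-spatially exponentially decaying. -/
def IsSED {N : ℕ} {n m : Fin N → ℕ} (dist : Fin N → Fin N → ℝ) (c γ : ℝ)
    (X : Matrix ((l : Fin N) × Fin (n l)) ((j : Fin N) × Fin (m j)) ℝ) : Prop :=
  ∀ l j : Fin N, opNorm (blk X l j) ≤ c * Real.exp (-γ * dist l j)

/-- `X` is `(c,γ)`-SED away from agent `i`. -/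
def IsSEDAway {N : ℕ} {n m : Fin N → ℕ} (dist : Fin N → Fin N → ℝ) (i : Fin N) (c γ : ℝ)
    (X : Matrix ((l : Fin N) × Fin (n l)) ((j : Fin N) × Fin (m j)) ℝ) : Prop :=
  ∀ l j : Fin N, opNorm (blk X l j) ≤ c * Real.exp (-γ * max (dist i l) (dist i j))

/-- `X` is `(τ,ρ)`-stable. -/
def IsStable {α : Type*} [Fintype α] [DecidableEq α] (τ ρ : ℝ) (X : Matrix α α ℝ) : Prop :=
  ∀ k : ℕ, opNorm (X ^ k) ≤ τ * Real.exp (-ρ * (k : ℝ))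


open scoped Matrix.Norms.L2Operator

lemma opNorm_eq_norm {α β : Type*} [Fintype α] [Fintype β] [DecidableEq β]
    (X : Matrix α β ℝ) : opNorm X = ‖X‖ := rfl

lemma my_opNorm_nonneg {α β : Type*} [Fintype α] [Fintype β] [DecidableEq β]
    (X : Matrix α β ℝ) : 0 ≤ opNorm X := by rw [opNorm_eq_norm]; exact norm_nonneg _

lemma my_opNorm_transpose {α β : Type*} [Fintype α] [Fintype β] [DecidableEq α] [DecidableEq β]
    (X : Matrix α β ℝ) : opNorm Xᵀ = opNorm X := by
  rw [opNorm_eq_norm, opNorm_eq_norm, ← Matrix.conjTranspose_eq_transpose_of_trivial,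
    Matrix.l2_opNorm_conjTranspose]

lemma my_opNorm_mul_le {α β γ : Type*} [Fintype α] [Fintype β] [Fintype γ]
    [DecidableEq β] [DecidableEq γ] (X : Matrix α β ℝ) (Y : Matrix β γ ℝ) :
    opNorm (X * Y) ≤ opNorm X * opNorm Y := by
  simp only [opNorm_eq_norm]; exact Matrix.l2_opNorm_mul X Y

lemma my_opNorm_sum_le {α β ι : Type*} [Fintype α] [Fintype β] [DecidableEq β]
    (s : Finset ι) (f : ι → Matrix α β ℝ) :
    opNorm (∑ t ∈ s, f t) ≤ ∑ t ∈ s, opNorm (f t) := by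
  simp only [opNorm_eq_norm]; exact norm_sum_le s f

lemma blk_mul {N : ℕ} {n m p : Fin N → ℕ}
    (X : Matrix ((l : Fin N) × Fin (n l)) ((j : Fin N) × Fin (m j)) ℝ)
    (Y : Matrix ((l : Fin N) × Fin (m l)) ((j : Fin N) × Fin (p j)) ℝ)
    (l j : Fin N) : blk (X * Y) l j = ∑ t : Fin N, blk X l t * blk Y t j := by
  ext a b
  simp [blk, Matrix.mul_apply, Matrix.sum_apply]
  rw [← Finset.univ_sigma_univ, Finset.sum_sigma]

lemma blk_transpose {N : ℕ} {n m : Fin N → ℕ}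
    (X : Matrix ((l : Fin N) × Fin (n l)) ((j : Fin N) × Fin (m j)) ℝ)
    (l j : Fin N) : blk Xᵀ l j = (blk X j l)ᵀ := rfl

lemma sedaway_mul_right
    {N : ℕ} {n : Fin N → ℕ} (dist : Fin N → Fin N → ℝ)
    (hdist_nonneg : ∀ l j, 0 ≤ dist l j)
    (hdist_tri : ∀ l j k, dist l j ≤ dist l k + dist k j)
    (i : Fin N) (c cL γ : ℝ) (hγ : 0 ≤ γ) (hc : 0 ≤ c) (hcL : 0 ≤ cL)
    (X L : Matrix ((l : Fin N) × Fin (n l)) ((j : Fin N) × Fin (n j)) ℝ)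
    (hX : IsSEDAway dist i c γ X) (hL : IsSED dist cL γ L) :
    IsSEDAway dist i ((N : ℝ) * cL * c) γ (X * L) := by
  intro l j
  rw [blk_mul]
  calc opNorm (∑ t : Fin N, blk X l t * blk L t j)
      ≤ ∑ t : Fin N, opNorm (blk X l t * blk L t j) := my_opNorm_sum_le _ _
    _ ≤ ∑ _t : Fin N, (cL * c) * Real.exp (-γ * max (dist i l) (dist i j)) := by
        apply Finset.sum_le_sum
        intro t _
        have hmax : max (dist i l) (dist i j) ≤ max (dist i l) (dist i t) + dist t j := by
          refine max_le (le_trans (le_max_left _ _)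
            (le_add_of_nonneg_right (hdist_nonneg t j))) ?_
          exact le_trans (hdist_tri i j t)
            (add_le_add_left (le_max_right _ _) _)
        calc opNorm (blk X l t * blk L t j)
            ≤ opNorm (blk X l t) * opNorm (blk L t j) := my_opNorm_mul_le _ _
          _ ≤ (c * Real.exp (-γ * max (dist i l) (dist i t))) *
              (cL * Real.exp (-γ * dist t j)) :=
            mul_le_mul (hX l t) (hL t j) (my_opNorm_nonneg _) (by positivity)
          _ = (cL * c) * Real.exp (-γ * (max (dist i l) (dist i t) + dist t j)) := by
            rw [mul_add, Real.exp_add]; ring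
          _ ≤ (cL * c) * Real.exp (-γ * max (dist i l) (dist i j)) := by
            apply mul_le_mul_of_nonneg_left _ (by positivity)
            exact Real.exp_le_exp.mpr (by nlinarith)
    _ = (N : ℝ) * cL * c * Real.exp (-γ * max (dist i l) (dist i j)) := by
        rw [Finset.sum_const, Finset.card_univ, Fintype.card_fin, nsmul_eq_mul]; ring

lemma sedaway_mul_left
    {N : ℕ} {n : Fin N → ℕ} (dist : Fin N → Fin N → ℝ)
    (hdist_nonneg : ∀ l j, 0 ≤ dist l j)
    (hdist_symm : ∀ l j, dist l j = dist j l)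
    (hdist_tri : ∀ l j k, dist l j ≤ dist l k + dist k j)
    (i : Fin N) (c cL γ : ℝ) (hγ : 0 ≤ γ) (hc : 0 ≤ c) (hcL : 0 ≤ cL)
    (X L : Matrix ((l : Fin N) × Fin (n l)) ((j : Fin N) × Fin (n j)) ℝ)
    (hX : IsSEDAway dist i c γ X) (hL : IsSED dist cL γ L) :
    IsSEDAway dist i ((N : ℝ) * cL * c) γ (Lᵀ * X) := by
  intro l j
  rw [blk_mul]
  calc opNorm (∑ t : Fin N, blk Lᵀ l t * blk X t j)
      ≤ ∑ t : Fin N, opNorm (blk Lᵀ l t * blk X t j) := my_opNorm_sum_le _ _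
    _ ≤ ∑ _t : Fin N, (cL * c) * Real.exp (-γ * max (dist i l) (dist i j)) := by
        apply Finset.sum_le_sum
        intro t _
        have hmax : max (dist i l) (dist i j) ≤ dist t l + max (dist i t) (dist i j) := by
          refine max_le ?_ ?_
          · calc dist i l ≤ dist i t + dist t l := hdist_tri i l t
              _ ≤ max (dist i t) (dist i j) + dist t l :=
                add_le_add_left (le_max_left _ _) _
              _ = dist t l + max (dist i t) (dist i j) := add_comm _ _
          · exact le_trans (le_max_right (dist i t) _)
              (le_add_of_nonneg_left (hdist_nonneg t l))
        calc opNorm (blk Lᵀ l t * blk X t j)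
            ≤ opNorm (blk Lᵀ l t) * opNorm (blk X t j) := my_opNorm_mul_le _ _
          _ ≤ (cL * Real.exp (-γ * dist t l)) *
              (c * Real.exp (-γ * max (dist i t) (dist i j))) := by
            apply mul_le_mul _ (hX t j) (my_opNorm_nonneg _) (by positivity)
            rw [blk_transpose, my_opNorm_transpose]
            exact hL t l
          _ = (cL * c) * Real.exp (-γ * (dist t l + max (dist i t) (dist i j))) := by
            rw [mul_add, Real.exp_add]; ring
          _ ≤ (cL * c) * Real.exp (-γ * max (dist i l) (dist i j)) := by
            apply mul_le_mul_of_nonneg_left _ (by positivity)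
            exact Real.exp_le_exp.mpr (by nlinarith)
    _ = (N : ℝ) * cL * c * Real.exp (-γ * max (dist i l) (dist i j)) := by
        rw [Finset.sum_const, Finset.card_univ, Fintype.card_fin, nsmul_eq_mul]; ring

/-- if `L` is `(c_L,γ)`-SED and `M` is `(c_M,γ)`-SED away from agent `i`,
then for every `k ≥ 0` the matrix `(Lᵏ)ᵀMLᵏ` is `((N c_L)^{2k} c_M, γ)`-SED away from `i`. -/
theorem SEDAway_conjugate_pow
    {N : ℕ} (n : Fin N → ℕ) (dist : Fin N → Fin N → ℝ)
    (hdist_nonneg : ∀ l j, 0 ≤ dist l j)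
    (hdist_symm : ∀ l j, dist l j = dist j l)
    (hdist_tri : ∀ l j k, dist l j ≤ dist l k + dist k j)
    (i : Fin N) (cL cM γ : ℝ) (hγ : 0 ≤ γ)
    (L M : Matrix ((l : Fin N) × Fin (n l)) ((j : Fin N) × Fin (n j)) ℝ)
    (hL : IsSED dist cL γ L) (hM : IsSEDAway dist i cM γ M) (k : ℕ) :
    IsSEDAway dist i (((N : ℝ) * cL) ^ (2 * k) * cM) γ ((L ^ k)ᵀ * M * L ^ k) := by
  
  have hcL : 0 ≤ cL := by
    have h := hL i i
    have h0 := my_opNorm_nonneg (blk L i i)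
    nlinarith [Real.exp_pos (-γ * dist i i)]
  have hcM : 0 ≤ cM := by
    have h := hM i i
    have h0 := my_opNorm_nonneg (blk M i i)
    nlinarith [Real.exp_pos (-γ * max (dist i i) (dist i i))]
  induction k with
  | zero =>
    simpa using hM
  | succ k ih =>
    have hc : 0 ≤ ((N : ℝ) * cL) ^ (2 * k) * cM := by positivity
    have h1 := sedaway_mul_right dist hdist_nonneg hdist_tri i _ cL γ hγ hc hcL
      ((L ^ k)ᵀ * M * L ^ k) L ih hL
    have h2 := sedaway_mul_left dist hdist_nonneg hdist_symm hdist_tri i _ cL γ hγ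
      (by positivity) hcL ((L ^ k)ᵀ * M * L ^ k * L) L h1 hL
    have hmat : (L ^ (k + 1))ᵀ * M * L ^ (k + 1) =
        Lᵀ * ((L ^ k)ᵀ * M * L ^ k * L) := by
      rw [pow_succ, Matrix.transpose_mul]
      noncomm_ring
    have hconst : ((N : ℝ) * cL) ^ (2 * (k + 1)) * cM =
        (N : ℝ) * cL * ((N : ℝ) * cL * (((N : ℝ) * cL) ^ (2 * k) * cM)) := by
      rw [show 2 * (k + 1) = 2 * k + 1 + 1 by ring, pow_succ, pow_succ]
      ring
    rw [hmat, hconst]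
    exact h2
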